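/- Let G be a group. Suppose either (a) there exists an odd positive integer k such that (g ⊗ g)^k = 1 in G ⊗ G for all g ∈ G, or (b) there exists an even positive integer n such that every element of G is an n-th power in G. Then ∇(G) = Δ(G); consequently J̃(G) ≅ M(G), i.e. π₂ˢ(K(G,1)) ≅ H₂(G). In particular, if G has odd exponent then π₂ˢ(K(G,1)) ≅ H₂(G). -/

import Mathlib

/- Nonabelian tensor square framework (Brown–Loday). -/

namespace NATensor

variable (G : Type*) [Group G]

/-- The relator set for the nonabelian tensor square of `G`:
`g g' ⊗ h = (ᵍg' ⊗ ᵍh)(g ⊗ h)` and `g ⊗ h h' = (g ⊗ h)(ʰg ⊗ ʰh')`. -/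
def rels : Set (FreeGroup (G × G)) :=
  {r | (∃ g g' h : G,
          r = FreeGroup.of (g * g', h) *
              (FreeGroup.of (g * g' * g⁻¹, g * h * g⁻¹) * FreeGroup.of (g, h))⁻¹) ∨
       (∃ g h h' : G,
          r = FreeGroup.of (g, h * h') *
              (FreeGroup.of (g, h) * FreeGroup.of (h * g * h⁻¹, h * h' * h⁻¹))⁻¹)}

/-- The nonabelian tensor square `G ⊗ G`. -/
abbrev TS := PresentedGroup (rels G)

variable {G}

/-- The generator `g ⊗ h` of the nonabelian tensor square. -/
def tmul (g h : G) : TS G := PresentedGroup.of (g, h)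

lemma mk_rel_eq_one {r : FreeGroup (G × G)} (hr : r ∈ rels G) :
    (PresentedGroup.mk (rels G) r : TS G) = 1 :=
  (QuotientGroup.eq_one_iff r).mpr (Subgroup.subset_normalClosure hr)

lemma tmul_rel₁ (g g' h : G) :
    tmul (g * g') h = tmul (g * g' * g⁻¹) (g * h * g⁻¹) * tmul g h := by
  have h1 := mk_rel_eq_one (G := G) (Or.inl ⟨g, g', h, rfl⟩)
  simp only [map_mul, map_inv, mul_inv_eq_one] at h1
  exact h1

lemma tmul_rel₂ (g h h' : G) :
    tmul g (h * h') = tmul g h * tmul (h * g * h⁻¹) (h * h' * h⁻¹) := by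
  have h1 := mk_rel_eq_one (G := G) (Or.inr ⟨g, h, h', rfl⟩)
  simp only [map_mul, map_inv, mul_inv_eq_one] at h1
  exact h1

variable (G)

/-- The homomorphism `κ : G ⊗ G → G`, `g ⊗ h ↦ [g,h] = g h g⁻¹ h⁻¹` (its image is `[G,G]`). -/
def kappa : TS G →* G :=
  PresentedGroup.toGroup (f := fun x : G × G => x.1 * x.2 * x.1⁻¹ * x.2⁻¹) (by
    rintro r (⟨g, g', h, rfl⟩ | ⟨g, h, h', rfl⟩) <;>
      simp only [map_mul, map_inv, FreeGroup.lift_apply_of] <;> group)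

variable {G}

@[simp] lemma kappa_tmul (g h : G) : kappa G (tmul g h) = g * h * g⁻¹ * h⁻¹ :=
  PresentedGroup.toGroup.of _

variable (G)

/-- `J(G) = ker κ ≅ π₃(SK(G,1))`. -/
def J : Subgroup (TS G) := (kappa G).ker

/-- `∇(G)`: the (normal) subgroup of `G ⊗ G` generated by the elements `x ⊗ x`. -/
def nabla : Subgroup (TS G) :=
  Subgroup.normalClosure {t | ∃ x : G, t = tmul x x}

/-- `Δ(G)`: the (normal) subgroup of `G ⊗ G` generated by the `(x ⊗ y)(y ⊗ x)`. -/
def delta : Subgroup (TS G) :=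
  Subgroup.normalClosure {t | ∃ x y : G, t = tmul x y * tmul y x}

instance : (nabla G).Normal := Subgroup.normalClosure_normal

instance : (delta G).Normal := Subgroup.normalClosure_normal

/-- The exterior square `G ∧ G = (G ⊗ G)/∇(G)`. -/
abbrev ES := TS G ⧸ nabla G

/-- The symmetric square `G ⊗̃ G = (G ⊗ G)/Δ(G)`. -/
abbrev SS := TS G ⧸ delta G

variable {G}

/-- The element `g ∧ h` of the exterior square. -/
def emul (g h : G) : ES G := QuotientGroup.mk' (nabla G) (tmul g h)

/-- The image of `g ⊗ h` in the symmetric square. -/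
def smul (g h : G) : SS G := QuotientGroup.mk' (delta G) (tmul g h)

variable {H : Type*} [Group H]

/-- The induced homomorphism `G ⊗ G → H ⊗ H` of a homomorphism `f : G → H`. -/
def tmap (f : G →* H) : TS G →* TS H :=
  PresentedGroup.toGroup (f := fun x : G × G => tmul (f x.1) (f x.2)) (by
    rintro r (⟨g, g', h, rfl⟩ | ⟨g, h, h', rfl⟩) <;>
      simp only [map_mul, map_inv, FreeGroup.lift_apply_of, mul_inv_eq_one]
    · rw [tmul_rel₁]
    · rw [tmul_rel₂])

@[simp] lemma tmap_tmul (f : G →* H) (g h : G) :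
    tmap f (tmul g h) = tmul (f g) (f h) :=
  PresentedGroup.toGroup.of _

lemma nabla_le_comap_nabla (f : G →* H) :
    nabla G ≤ MonoidHom.ker ((QuotientGroup.mk' (nabla H)).comp (tmap f)) := by
  refine Subgroup.normalClosure_le_normal ?_
  rintro _ ⟨y, rfl⟩
  simp only [SetLike.mem_coe, MonoidHom.mem_ker, MonoidHom.comp_apply, tmap_tmul,
    QuotientGroup.mk'_apply, QuotientGroup.eq_one_iff]
  exact Subgroup.subset_normalClosure ⟨f y, rfl⟩

lemma delta_le_comap_delta (f : G →* H) :
    delta G ≤ MonoidHom.ker ((QuotientGroup.mk' (delta H)).comp (tmap f)) := by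
  refine Subgroup.normalClosure_le_normal ?_
  rintro _ ⟨x, y, rfl⟩
  simp only [SetLike.mem_coe, MonoidHom.mem_ker, MonoidHom.comp_apply, map_mul, tmap_tmul,
    QuotientGroup.mk'_apply, ← QuotientGroup.mk_mul, QuotientGroup.eq_one_iff]
  exact Subgroup.subset_normalClosure ⟨f x, f y, rfl⟩

/-- The induced homomorphism `G ∧ G → H ∧ H` of a homomorphism `f : G → H`. -/
def emap (f : G →* H) : ES G →* ES H :=
  QuotientGroup.lift (nabla G) ((QuotientGroup.mk' (nabla H)).comp (tmap f))
    (fun x hx => MonoidHom.mem_ker.mp (nabla_le_comap_nabla f hx))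

@[simp] lemma emap_emul (f : G →* H) (g h : G) :
    emap f (emul g h) = emul (f g) (f h) := by
  simp [emap, emul, QuotientGroup.mk'_apply, QuotientGroup.lift_mk'] <;>
    exact congrArg _ (tmap_tmul f g h)

/-- The induced homomorphism `G ⊗̃ G → H ⊗̃ H` of a homomorphism `f : G → H`. -/
def smap (f : G →* H) : SS G →* SS H :=
  QuotientGroup.lift (delta G) ((QuotientGroup.mk' (delta H)).comp (tmap f))
    (fun x hx => MonoidHom.mem_ker.mp (delta_le_comap_delta f hx))

variable (G)

lemma nabla_le_ker_kappa : nabla G ≤ (kappa G).ker := by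
  refine Subgroup.normalClosure_le_normal ?_
  rintro _ ⟨x, rfl⟩
  simp only [SetLike.mem_coe, MonoidHom.mem_ker, kappa_tmul]
  group

/-- The homomorphism `κ' : G ∧ G → G`, `g ∧ h ↦ [g,h]` (its image is `[G,G]`). -/
def kappa' : ES G →* G :=
  QuotientGroup.lift (nabla G) (kappa G)
    (fun x hx => MonoidHom.mem_ker.mp (nabla_le_ker_kappa G hx))

/-- The Schur multiplier `M(G) = ker κ' ≅ H₂(G)`. -/
def M : Subgroup (ES G) := (kappa' G).ker

/-- `J̃(G) = J(G)/Δ(G) ≅ π₂ˢ(K(G,1))`, realized as the image of `J(G)` in `G ⊗̃ G`. -/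
def Jt : Subgroup (SS G) := Subgroup.map (QuotientGroup.mk' (delta G)) (J G)

/-- `∇(G)/Δ(G)`, realized as the image of `∇(G)` in `G ⊗̃ G`. -/
def nablaBar : Subgroup (SS G) := Subgroup.map (QuotientGroup.mk' (delta G)) (nabla G)

end NATensor

namespace NATensorAux

open NATensor

variable {G : Type*} [Group G]

lemma tmul_one'' (g : G) : tmul g (1 : G) = 1 := by
  have h := tmul_rel₂ g 1 1
  simp only [one_mul, mul_one, inv_one] at h
  exact left_eq_mul.mp h

lemma one_tmul'' (g : G) : tmul (1 : G) g = 1 := by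
  have h := tmul_rel₁ 1 1 g
  simp only [one_mul, mul_one, inv_one] at h
  exact left_eq_mul.mp h

lemma tmul_pow_left (x : G) (a : ℕ) : tmul (x ^ a) x = (tmul x x) ^ a := by
  induction a with
  | zero => simpa using one_tmul'' x
  | succ a ih =>
    have h := tmul_rel₁ x (x ^ a) x
    rw [show x * x ^ a * x⁻¹ = x ^ a by
          group,
        show x * x * x⁻¹ = x by group,
        show x * x ^ a = x ^ (a + 1) by rw [pow_succ']] at h
    rw [h, ih, pow_succ]

lemma tmul_pow_pow (x : G) (a b : ℕ) : tmul (x ^ a) (x ^ b) = (tmul x x) ^ (a * b) := by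
  induction b with
  | zero => simpa using tmul_one'' (x ^ a)
  | succ b ih =>
    have h := tmul_rel₂ (x ^ a) (x ^ b) x
    rw [show x ^ b * x ^ a * (x ^ b)⁻¹ = x ^ a by
          group,
        show x ^ b * x * (x ^ b)⁻¹ = x by
          group,
        show x ^ b * x = x ^ (b + 1) by rw [pow_succ]] at h
    rw [h, ih, tmul_pow_left, ← pow_add, Nat.mul_succ]

lemma tmul_self_mem_nabla (x : G) : tmul x x ∈ nabla G :=
  Subgroup.subset_normalClosure ⟨x, rfl⟩

lemma sq_tmul_mem_delta (x : G) : tmul x x * tmul x x ∈ delta G :=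
  Subgroup.subset_normalClosure ⟨x, x, rfl⟩

lemma delta_le_nabla : delta G ≤ nabla G := by
  refine Subgroup.normalClosure_le_normal ?_
  rintro _ ⟨a, b, rfl⟩
  have h1 := tmul_rel₁ b (b⁻¹ * a * b) (a * b)
  rw [show b * (b⁻¹ * a * b) * b⁻¹ = a by group,
      show b * (a * b) * b⁻¹ = b * a by group,
      show b * (b⁻¹ * a * b) = a * b by group] at h1
  have h2 := tmul_rel₂ a b a
  have h3 := tmul_rel₂ b a b
  have key : tmul (a * b) (a * b) =
      tmul a b * tmul (b * a * b⁻¹) (b * a * b⁻¹) *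
        (tmul b a * tmul (a * b * a⁻¹) (a * b * a⁻¹)) := by
    rw [h1, h2, h3]
  have hT := tmul_self_mem_nabla (a * b)
  have hn1 := tmul_self_mem_nabla (b * a * b⁻¹)
  have hn2 := tmul_self_mem_nabla (a * b * a⁻¹)
  have hid : tmul a b * tmul b a =
      tmul (a * b) (a * b) * (tmul (a * b * a⁻¹) (a * b * a⁻¹))⁻¹ *
        ((tmul b a)⁻¹ * (tmul (b * a * b⁻¹) (b * a * b⁻¹))⁻¹ * ((tmul b a)⁻¹)⁻¹) := by
    rw [key]; group
  rw [SetLike.mem_coe, hid]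
  exact mul_mem (mul_mem hT (inv_mem hn2))
    ((inferInstance : (nabla G).Normal).conj_mem _ (inv_mem hn1) _)

lemma nabla_le_delta
    (h : (∃ k : ℕ, Odd k ∧ ∀ g : G, (tmul g g) ^ k = 1) ∨
         (∃ n : ℕ, Even n ∧ 0 < n ∧ ∀ g : G, ∃ x : G, x ^ n = g)) :
    nabla G ≤ delta G := by
  refine Subgroup.normalClosure_le_normal ?_
  rintro _ ⟨g, rfl⟩
  rw [SetLike.mem_coe]
  rcases h with ⟨k, hk, hpow⟩ | ⟨n, hn, _, hsurj⟩
  · obtain ⟨m, rfl⟩ := hk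
    have h1 := hpow g
    have h2 : (tmul g g * tmul g g) ^ m = (tmul g g) ^ (2 * m) := by
      rw [← pow_two, ← pow_mul]
    have h3 : tmul g g * (tmul g g) ^ (2 * m) = 1 := by
      rw [← pow_succ']; exact h1
    have h4 : tmul g g = ((tmul g g * tmul g g) ^ m)⁻¹ := by
      rw [h2]; exact eq_inv_of_mul_eq_one_left h3
    rw [h4]
    exact inv_mem (pow_mem (sq_tmul_mem_delta g) m)
  · obtain ⟨x, rfl⟩ := hsurj g
    obtain ⟨m, rfl⟩ := hn
    rw [tmul_pow_pow, show (m + m) * (m + m) = 2 * ((m + m) * m) by ring,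
      pow_mul, pow_two]
    exact pow_mem (sq_tmul_mem_delta x) _

end NATensorAux

open NATensor in
/-- if (a) there is an odd (positive) integer `k` with `(g ⊗ g)^k = 1` for all
`g ∈ G`, or (b) there is an even positive integer `n` such that every element of `G` is an
`n`-th power, then `∇(G) = Δ(G)`; consequently `J̃(G) ≅ M(G)`, i.e.
`π₂ˢ(K(G,1)) ≅ H₂(G)` (in particular this holds when `G` has odd exponent). -/
theorem nabla_eq_delta_of_odd_power_or_even_roots (G : Type*) [Group G]
    (h : (∃ k : ℕ, Odd k ∧ ∀ g : G, (tmul g g) ^ k = 1) ∨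
         (∃ n : ℕ, Even n ∧ 0 < n ∧ ∀ g : G, ∃ x : G, x ^ n = g)) :
    nabla G = delta G ∧ Nonempty (↥(Jt G) ≃* ↥(M G)) := by
  have hnd : nabla G = delta G := le_antisymm (NATensorAux.nabla_le_delta h) NATensorAux.delta_le_nabla
  refine ⟨hnd, ?_⟩
  let e : SS G ≃* ES G := QuotientGroup.quotientMulEquivOfEq hnd.symm
  have hM : M G = Subgroup.map (QuotientGroup.mk' (nabla G)) (J G) := by
    ext x
    constructor
    · intro hx
      obtain ⟨y, rfl⟩ := QuotientGroup.mk'_surjective (nabla G) x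
      refine ⟨y, ?_, rfl⟩
      have h1 : kappa' G (QuotientGroup.mk' (nabla G) y) = kappa G y :=
        QuotientGroup.lift_mk' _ _ y
      exact MonoidHom.mem_ker.mpr (by rw [← h1]; exact hx)
    · rintro ⟨y, hy, rfl⟩
      have h1 : kappa' G (QuotientGroup.mk' (nabla G) y) = kappa G y :=
        QuotientGroup.lift_mk' _ _ y
      exact MonoidHom.mem_ker.mpr (by rw [h1]; exact hy)
  have hcomp : (e : SS G →* ES G).comp (QuotientGroup.mk' (delta G)) =
      QuotientGroup.mk' (nabla G) := by
    ext y
    simpa [e] using QuotientGroup.quotientMulEquivOfEq_mk hnd.symm y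
  have hmap : Subgroup.map (e : SS G →* ES G) (Jt G) = M G := by
    rw [hM, Jt, Subgroup.map_map, hcomp]
  exact ⟨(e.subgroupMap (Jt G)).trans (MulEquiv.subgroupCongr hmap)⟩
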